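/- Let α₀ > -1, α₁ > 0, and c > 0. The function φ(I) = e^{-α₁} Γ(1+α₀) I^{α₀} (√(α₁ I / c))^{-α₀} 𝓘_{α₀}(2√(α₁ I / c)), where 𝓘_{α₀} is the modified Bessel function of the first kind of order α₀, has Laplace transform A_s(s) = e^{-α₁} Γ(1+α₀) s^{-(1+α₀)} exp(α₁/(c s)) for s > 0. -/

import Mathlib

open Real MeasureTheory Set

/-- Modified Bessel function of the first kind of (real) order `ν`, for real `z`. -/
noncomputable def besselI (ν z : ℝ) : ℝ :=
  ∑' k : ℕ, (z / 2) ^ (2 * (k : ℝ) + ν) / ((k.factorial : ℝ) * Real.Gamma ((k : ℝ) + ν + 1))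

theorem laplace_of_bessel_density (α₀ α₁ c : ℝ) (hα₀ : -1 < α₀) (hα₁ : 0 < α₁) (hc : 0 < c) :
    ∀ s : ℝ, 0 < s →
      ∫ I in Ioi (0:ℝ),
          Real.exp (-s * I) *
            (Real.exp (-α₁) * Real.Gamma (1 + α₀) * I ^ α₀ *
              (Real.sqrt (α₁ * I / c)) ^ (-α₀) * besselI α₀ (2 * Real.sqrt (α₁ * I / c)))
        = Real.exp (-α₁) * Real.Gamma (1 + α₀) * s ^ (-(1 + α₀)) * Real.exp (α₁ / (c * s)) := by
  intro s hs
  set C : ℝ := Real.exp (-α₁) * Real.Gamma (1 + α₀) with hCdef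
  have hC0 : 0 < C := mul_pos (Real.exp_pos _) (Real.Gamma_pos_of_pos (by linarith))
  have hG : ∀ k : ℕ, 0 < Real.Gamma ((k : ℝ) + α₀ + 1) := fun k =>
    Real.Gamma_pos_of_pos (by have := Nat.cast_nonneg (α := ℝ) k; linarith)
  set F : ℕ → ℝ → ℝ := fun k I =>
    C * (α₁ / c) ^ k / ((k.factorial : ℝ) * Real.Gamma ((k : ℝ) + α₀ + 1)) *
      (I ^ (α₀ + (k : ℝ)) * Real.exp (-s * I)) with hFdef
  have hq : ∀ k : ℕ, -1 < α₀ + (k : ℝ) := fun k => by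
    have := Nat.cast_nonneg (α := ℝ) k; linarith
  have hck : ∀ k : ℕ, 0 < C * (α₁ / c) ^ k / ((k.factorial : ℝ) * Real.Gamma ((k : ℝ) + α₀ + 1)) :=
    fun k => by
      have h1 : (0:ℝ) < (k.factorial : ℝ) := by exact_mod_cast k.factorial_pos
      have := hG k
      positivity
  -- integrability of each term
  have hInt : ∀ k : ℕ, IntegrableOn (F k) (Ioi 0) := by
    intro k
    have h := integrableOn_rpow_mul_exp_neg_mul_rpow (s := α₀ + (k : ℝ)) (p := 1) (b := s)
      (hq k) one_pos hs
    simp only [Real.rpow_one] at h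
    exact h.const_mul _
  -- value of each integral
  have hval : ∀ k : ℕ, ∫ I in Ioi 0, F k I
      = C * s ^ (-(1 + α₀)) * ((α₁ / (c * s)) ^ k / (k.factorial : ℝ)) := by
    intro k
    have h := integral_rpow_mul_exp_neg_mul_rpow (p := 1) (q := α₀ + (k : ℝ)) (b := s)
      one_pos (hq k) hs
    simp only [Real.rpow_one, div_one, one_div] at h
    rw [hFdef]
    simp only [MeasureTheory.integral_const_mul]
    rw [h]
    have hΓ : Real.Gamma (α₀ + (k : ℝ) + 1) = Real.Gamma ((k : ℝ) + α₀ + 1) := by ring_nf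
    have hpow : s ^ (-(α₀ + (k : ℝ) + 1)) = s ^ (-(1 + α₀)) * ((s : ℝ) ^ k)⁻¹ := by
      rw [show -(α₀ + (k : ℝ) + 1) = -(1 + α₀) + (-(k : ℝ)) by ring, Real.rpow_add hs,
        Real.rpow_neg hs.le ((k : ℝ)), Real.rpow_natCast]
    rw [hΓ, hpow]
    have hΓ0 : Real.Gamma ((k : ℝ) + α₀ + 1) ≠ 0 := (hG k).ne'
    have hf0 : ((k.factorial : ℝ)) ≠ 0 := by exact_mod_cast k.factorial_pos.ne'
    have hs0 : (s : ℝ) ^ k ≠ 0 := pow_ne_zero _ hs.ne'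
    have hsplit : (α₁ / (c * s)) ^ k = (α₁ / c) ^ k * ((s : ℝ) ^ k)⁻¹ := by
      rw [div_mul_eq_div_div, div_pow, div_eq_mul_inv]
    rw [hsplit]
    field_simp
  -- each term is nonneg on Ioi 0, so norm integral = integral
  have hnorm : ∀ k : ℕ, ∫ I in Ioi 0, ‖F k I‖ = ∫ I in Ioi 0, F k I := by
    intro k
    refine setIntegral_congr_fun measurableSet_Ioi (fun I hI => ?_)
    have hI0 : (0:ℝ) < I := hI
    have : 0 ≤ F k I := by
      have := hck k
      have h1 : 0 ≤ I ^ (α₀ + (k : ℝ)) := Real.rpow_nonneg hI0.le _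
      have h2 : 0 ≤ Real.exp (-s * I) := (Real.exp_pos _).le
      positivity
    exact Real.norm_of_nonneg this
  have hSummable : Summable fun k : ℕ => ∫ I in Ioi 0, ‖F k I‖ := by
    simp only [hnorm, hval]
    exact (Real.summable_pow_div_factorial (α₁ / (c * s))).mul_left _
  -- swap integral and sum
  have hswap := (MeasureTheory.hasSum_integral_of_summable_integral_norm
    (μ := volume.restrict (Ioi (0:ℝ))) hInt hSummable).tsum_eq
  -- pointwise identity
  have hpt : ∀ I ∈ Ioi (0:ℝ),
      Real.exp (-s * I) * (C * I ^ α₀ *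
        (Real.sqrt (α₁ * I / c)) ^ (-α₀) * besselI α₀ (2 * Real.sqrt (α₁ * I / c)))
      = ∑' k : ℕ, F k I := by
    intro I hI
    have hI0 : (0:ℝ) < I := hI
    have hx : (0:ℝ) < α₁ * I / c := by positivity
    have hsx : (0:ℝ) < Real.sqrt (α₁ * I / c) := Real.sqrt_pos.mpr hx
    rw [besselI, show (2 * Real.sqrt (α₁ * I / c)) / 2 = Real.sqrt (α₁ * I / c) by ring,
      ← tsum_mul_left, ← tsum_mul_left]
    refine tsum_congr fun k => ?_
    have h1 : (Real.sqrt (α₁ * I / c)) ^ (-α₀) *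
        (Real.sqrt (α₁ * I / c)) ^ (2 * (k : ℝ) + α₀) = (α₁ / c) ^ k * I ^ (k : ℕ) := by
      rw [← Real.rpow_add hsx, show -α₀ + (2 * (k : ℝ) + α₀) = ((2 * k : ℕ) : ℝ) by
        push_cast; ring, Real.rpow_natCast, pow_mul, Real.sq_sqrt hx.le,
        show α₁ * I / c = (α₁ / c) * I by ring, mul_pow]
    have h2 : I ^ α₀ * (I : ℝ) ^ (k : ℕ) = I ^ (α₀ + (k : ℝ)) := by
      rw [← Real.rpow_natCast I k, ← Real.rpow_add hI0]
    rw [hFdef]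
    simp only
    calc Real.exp (-s * I) * (C * I ^ α₀ * Real.sqrt (α₁ * I / c) ^ (-α₀) *
          (Real.sqrt (α₁ * I / c) ^ (2 * (k:ℝ) + α₀) /
            ((k.factorial : ℝ) * Real.Gamma ((k:ℝ) + α₀ + 1))))
        = Real.exp (-s * I) * C * I ^ α₀ * ((Real.sqrt (α₁ * I / c)) ^ (-α₀) *
            (Real.sqrt (α₁ * I / c)) ^ (2 * (k : ℝ) + α₀)) /
            ((k.factorial : ℝ) * Real.Gamma ((k:ℝ) + α₀ + 1)) := by ring
      _ = Real.exp (-s * I) * C * I ^ α₀ * ((α₁ / c) ^ k * I ^ (k:ℕ)) /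
            ((k.factorial : ℝ) * Real.Gamma ((k:ℝ) + α₀ + 1)) := by rw [h1]
      _ = Real.exp (-s * I) * C * (I ^ α₀ * I ^ (k:ℕ)) * (α₁ / c) ^ k /
            ((k.factorial : ℝ) * Real.Gamma ((k:ℝ) + α₀ + 1)) := by ring
      _ = Real.exp (-s * I) * C * I ^ (α₀ + (k:ℝ)) * (α₁ / c) ^ k /
            ((k.factorial : ℝ) * Real.Gamma ((k:ℝ) + α₀ + 1)) := by rw [h2]
      _ = C * (α₁ / c) ^ k / ((k.factorial : ℝ) * Real.Gamma ((k:ℝ) + α₀ + 1)) *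
            (I ^ (α₀ + (k:ℝ)) * Real.exp (-s * I)) := by ring
  -- put it together
  calc ∫ I in Ioi (0:ℝ), Real.exp (-s * I) * (C * I ^ α₀ *
        (Real.sqrt (α₁ * I / c)) ^ (-α₀) * besselI α₀ (2 * Real.sqrt (α₁ * I / c)))
      = ∫ I in Ioi (0:ℝ), ∑' k : ℕ, F k I :=
        setIntegral_congr_fun measurableSet_Ioi hpt
    _ = ∑' k : ℕ, ∫ I in Ioi (0:ℝ), F k I := hswap.symm
    _ = ∑' k : ℕ, C * s ^ (-(1 + α₀)) * ((α₁ / (c * s)) ^ k / (k.factorial : ℝ)) :=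
        tsum_congr hval
    _ = C * s ^ (-(1 + α₀)) * ∑' k : ℕ, ((α₁ / (c * s)) ^ k / (k.factorial : ℝ)) :=
        tsum_mul_left
    _ = C * s ^ (-(1 + α₀)) * Real.exp (α₁ / (c * s)) := by
        rw [Real.exp_eq_exp_ℝ, NormedSpace.exp_eq_tsum_div]
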